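/- Let q ∈ ℝ with q > 1, and for n ∈ ℤ set λ_n = (1/2)·ln((q+1)/(q−1)) + i n π. Let a : ℤ → ℂ satisfy Σ_{n∈ℤ} |a_n| < ∞ with a not identically zero, let y_e(t) = Σ_{n∈ℤ} a_n e^{λ_n t}, let d : ℝ → ℂ be measurable with |d(t)| ≤ M for all t and some M ≥ 0, and set y = y_e + d. Fix c > 2 and for T ∈ ℝ define q_T = ( ‖y‖_{L²(T,T+c)} + ‖y‖_{L²(T−2,T+c−2)} ) / ( ‖y‖_{L²(T,T+c)} − ‖y‖_{L²(T−2,T+c−2)} ). Then q_T → q as T → +∞. -/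

import Mathlib

open MeasureTheory

open Filter intervalIntegral Topology

lemma exp_int_orth (k : ℤ) (hk : k ≠ 0) :
    ∫ t in (0:ℝ)..2, Complex.exp ((k:ℂ) * (Real.pi:ℂ) * Complex.I * t) = 0 := by
  have hc : (k:ℂ) * (Real.pi:ℂ) * Complex.I ≠ 0 :=
    mul_ne_zero (mul_ne_zero (Int.cast_ne_zero.mpr hk)
      (Complex.ofReal_ne_zero.mpr Real.pi_ne_zero)) Complex.I_ne_zero
  rw [integral_exp_mul_complex hc]
  have h2 : ((k:ℂ) * (Real.pi:ℂ) * Complex.I) * (2:ℝ) = (k:ℂ) * (2 * (Real.pi:ℂ) * Complex.I) := by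
    push_cast; ring
  rw [h2, Complex.exp_int_mul_two_pi_mul_I]
  simp

lemma fourier_coeff (a : ℤ → ℂ) (ha : Summable fun n => ‖a n‖) (m : ℤ) :
    ∫ t in (0:ℝ)..2, (∑' n : ℤ, a n * Complex.exp ((n:ℂ) * (Real.pi:ℂ) * Complex.I * t))
      * Complex.exp (-((m:ℂ) * (Real.pi:ℂ) * Complex.I * t)) = 2 * a m := by
  have key : ∀ (n : ℤ) (t : ℝ),
      (a n * Complex.exp ((n:ℂ) * (Real.pi:ℂ) * Complex.I * t))
        * Complex.exp (-((m:ℂ) * (Real.pi:ℂ) * Complex.I * t))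
      = a n * Complex.exp (((n - m : ℤ):ℂ) * (Real.pi:ℂ) * Complex.I * t) := by
    intro n t
    rw [mul_assoc, ← Complex.exp_add]
    congr 2
    push_cast; ring
  have hnorm : ∀ (n : ℤ) (t : ℝ),
      ‖a n * Complex.exp (((n - m : ℤ):ℂ) * (Real.pi:ℂ) * Complex.I * t)‖ = ‖a n‖ := by
    intro n t
    rw [norm_mul, Complex.norm_exp]
    have : (((n - m : ℤ):ℂ) * (Real.pi:ℂ) * Complex.I * t).re = 0 := by
      simp [Complex.mul_re, Complex.mul_im]
    rw [this, Real.exp_zero, mul_one]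
  have hmeas : ∀ n : ℤ, AEStronglyMeasurable
      (fun t : ℝ => a n * Complex.exp (((n - m : ℤ):ℂ) * (Real.pi:ℂ) * Complex.I * t))
      (volume.restrict (Set.Ioc (0:ℝ) 2)) :=
    fun n => (Continuous.aestronglyMeasurable (by continuity))
  have hsum : Summable fun n : ℤ => ‖a n‖₊ := by
    rw [← NNReal.summable_coe]; simpa using ha
  have hf' : (∑' n : ℤ, ∫⁻ t in Set.Ioc (0:ℝ) 2,
      ‖a n * Complex.exp (((n - m : ℤ):ℂ) * (Real.pi:ℂ) * Complex.I * t)‖₊) ≠ ⊤ := by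
    have heq : ∀ n : ℤ, (∫⁻ t in Set.Ioc (0:ℝ) 2,
        ‖a n * Complex.exp (((n - m : ℤ):ℂ) * (Real.pi:ℂ) * Complex.I * t)‖₊)
        = (‖a n‖₊ : ENNReal) * 2 := by
      intro n
      have h1 : (fun t : ℝ =>
          (‖a n * Complex.exp (((n - m : ℤ):ℂ) * (Real.pi:ℂ) * Complex.I * t)‖₊ : ENNReal))
          = fun _ => (‖a n‖₊ : ENNReal) := by
        funext t
        congr 1
        exact NNReal.coe_injective (by simpa [coe_nnnorm] using hnorm n t)
      rw [h1, MeasureTheory.setLIntegral_const]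
      rw [Real.volume_Ioc]
      norm_num
    rw [funext heq]
    rw [ENNReal.tsum_mul_right]
    exact ENNReal.mul_ne_top (ENNReal.tsum_coe_ne_top_iff_summable.mpr hsum) (by norm_num)
  have hswap : ∫ t in (0:ℝ)..2, (∑' n : ℤ,
      a n * Complex.exp (((n - m : ℤ):ℂ) * (Real.pi:ℂ) * Complex.I * t))
      = ∑' n : ℤ, ∫ t in (0:ℝ)..2,
        a n * Complex.exp (((n - m : ℤ):ℂ) * (Real.pi:ℂ) * Complex.I * t) := by
    rw [intervalIntegral.integral_of_le (by norm_num : (0:ℝ) ≤ 2),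
      MeasureTheory.integral_tsum hmeas hf']
    exact tsum_congr fun n => (intervalIntegral.integral_of_le (by norm_num : (0:ℝ) ≤ 2)).symm
  have hval : ∀ n : ℤ, (∫ t in (0:ℝ)..2,
      a n * Complex.exp (((n - m : ℤ):ℂ) * (Real.pi:ℂ) * Complex.I * t))
      = if n = m then 2 * a m else 0 := by
    intro n
    by_cases h : n = m
    · subst h
      simp only [sub_self, Int.cast_zero, zero_mul, Complex.exp_zero, mul_one]
      rw [intervalIntegral.integral_const]
      simp [if_pos rfl]
    · rw [if_neg h, intervalIntegral.integral_const_mul, exp_int_orth (n - m) (sub_ne_zero.mpr h),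
        mul_zero]
  calc ∫ t in (0:ℝ)..2, (∑' n : ℤ, a n * Complex.exp ((n:ℂ) * (Real.pi:ℂ) * Complex.I * t))
      * Complex.exp (-((m:ℂ) * (Real.pi:ℂ) * Complex.I * t))
      = ∫ t in (0:ℝ)..2, (∑' n : ℤ,
          a n * Complex.exp (((n - m : ℤ):ℂ) * (Real.pi:ℂ) * Complex.I * t)) := by
        apply intervalIntegral.integral_congr
        intro t _
        calc (∑' n : ℤ, a n * Complex.exp ((n:ℂ) * (Real.pi:ℂ) * Complex.I * t))
              * Complex.exp (-((m:ℂ) * (Real.pi:ℂ) * Complex.I * t))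
            = ∑' n : ℤ, (a n * Complex.exp ((n:ℂ) * (Real.pi:ℂ) * Complex.I * t))
              * Complex.exp (-((m:ℂ) * (Real.pi:ℂ) * Complex.I * t)) := tsum_mul_right.symm
          _ = _ := tsum_congr fun n => key n t
    _ = ∑' n : ℤ, ∫ t in (0:ℝ)..2,
          a n * Complex.exp (((n - m : ℤ):ℂ) * (Real.pi:ℂ) * Complex.I * t) := hswap
    _ = ∑' n : ℤ, (if n = m then 2 * a m else 0) := tsum_congr hval
    _ = 2 * a m := tsum_ite_eq m (fun _ => 2 * a m)


lemma intInt_of_bounded {h : ℝ → ℝ} (hm : Measurable h) {A B : ℝ} (hab : A ≤ B) {C : ℝ}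
    (hC : ∀ t ∈ Set.Ioc A B, |h t| ≤ C) : IntervalIntegrable h volume A B := by
  rw [intervalIntegrable_iff_integrableOn_Ioc_of_le hab]
  apply Measure.integrableOn_of_bounded (measure_Ioc_lt_top.ne) hm.aestronglyMeasurable
  exact (ae_restrict_iff' measurableSet_Ioc).mpr (ae_of_all _ fun t ht => by
    rw [Real.norm_eq_abs]; exact hC t ht)

set_option maxHeartbeats 1000000 in
/-- Corollary 3.2 of the paper for the anti-stable wave equation: the estimator computed
from two shifted windows of the disturbed output converges to the true anti-damping
coefficient `q` as the window start time tends to infinity. -/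
theorem wave_disturbed_identification (q : ℝ) (hq : 1 < q)
    (lam : ℤ → ℂ)
    (hlam : ∀ n : ℤ,
      lam n = ((Real.log ((q + 1) / (q - 1)) : ℂ)) / 2 + (n : ℂ) * (Real.pi : ℂ) * Complex.I)
    (a : ℤ → ℂ) (ha : Summable fun n => ‖a n‖) (ha0 : a ≠ 0)
    (M : ℝ) (hM : 0 ≤ M)
    (d : ℝ → ℂ) (hdmeas : Measurable d) (hdM : ∀ t : ℝ, ‖d t‖ ≤ M)
    (y : ℝ → ℂ)
    (hy : ∀ t : ℝ, y t = (∑' n : ℤ, a n * Complex.exp (lam n * (t : ℂ))) + d t)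
    (c : ℝ) (hc : 2 < c) :
    Filter.Tendsto
      (fun T : ℝ =>
        (Real.sqrt (∫ t in T..(T + c), ‖y t‖ ^ 2) +
            Real.sqrt (∫ t in (T - 2)..(T + c - 2), ‖y t‖ ^ 2)) /
        (Real.sqrt (∫ t in T..(T + c), ‖y t‖ ^ 2) -
            Real.sqrt (∫ t in (T - 2)..(T + c - 2), ‖y t‖ ^ 2)))
      Filter.atTop (nhds q) := by
  -- basic setup
  have hq1 : (0:ℝ) < q - 1 := by linarith
  have hr1 : 1 < (q+1)/(q-1) := by rw [lt_div_iff₀ hq1]; linarith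
  set f : ℝ := Real.log ((q+1)/(q-1)) / 2 with hfdef
  have hfpos : 0 < f := div_pos (Real.log_pos hr1) two_pos
  have hexp2f : Real.exp (2*f) = (q+1)/(q-1) := by
    rw [hfdef, show 2*(Real.log ((q+1)/(q-1))/2) = Real.log ((q+1)/(q-1)) by ring]
    exact Real.exp_log (lt_trans one_pos hr1)
  have hexpsq : ∀ A : ℝ, Real.exp A ^ 2 = Real.exp (2*A) := fun A => by
    rw [sq, ← Real.exp_add]; ring_nf
  -- the periodic part g
  set g : ℝ → ℂ := fun t : ℝ => ∑' n : ℤ, a n * Complex.exp ((n:ℂ) * (Real.pi:ℂ) * Complex.I * t)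
    with hgdef
  have hterm_norm : ∀ (n : ℤ) (t : ℝ),
      ‖a n * Complex.exp ((n:ℂ) * (Real.pi:ℂ) * Complex.I * t)‖ = ‖a n‖ := by
    intro n t
    rw [norm_mul, Complex.norm_exp]
    have : ((n:ℂ) * (Real.pi:ℂ) * Complex.I * t).re = 0 := by
      simp [Complex.mul_re, Complex.mul_im]
    rw [this, Real.exp_zero, mul_one]
  have hgcont : Continuous g := by
    rw [hgdef]
    exact continuous_tsum (fun n => by continuity) ha (fun n t => le_of_eq (hterm_norm n t))
  set S : ℝ := ∑' n : ℤ, ‖a n‖ with hSdef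
  have hS0 : 0 ≤ S := tsum_nonneg fun n => norm_nonneg _
  have hgbdd : ∀ t : ℝ, ‖g t‖ ≤ S := by
    intro t
    have hsum' : Summable fun n : ℤ => ‖a n * Complex.exp ((n:ℂ) * (Real.pi:ℂ) * Complex.I * t)‖ := by
      simpa only [hterm_norm] using ha
    calc ‖g t‖ ≤ ∑' n : ℤ, ‖a n * Complex.exp ((n:ℂ) * (Real.pi:ℂ) * Complex.I * t)‖ :=
          norm_tsum_le_tsum_norm hsum'
      _ = S := tsum_congr fun n => hterm_norm n t
  have hgper : ∀ t : ℝ, g (t + 2) = g t := by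
    intro t
    rw [hgdef]
    simp only
    apply tsum_congr; intro n
    congr 1
    rw [show ((n:ℂ) * (Real.pi:ℂ) * Complex.I * ((t + 2 : ℝ) : ℂ))
        = (n:ℂ) * (Real.pi:ℂ) * Complex.I * (t:ℂ) + (n:ℂ) * (2 * (Real.pi:ℂ) * Complex.I) by
      push_cast; ring]
    rw [Complex.exp_add, Complex.exp_int_mul_two_pi_mul_I, mul_one]
  -- the exact output and its modulus u
  have hye : ∀ t : ℝ, (∑' n : ℤ, a n * Complex.exp (lam n * (t:ℂ)))
      = ((Real.exp (f*t) : ℝ) : ℂ) * g t := by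
    intro t
    rw [hgdef]
    simp only
    rw [← tsum_mul_left]
    apply tsum_congr; intro n
    rw [hlam n,
      show (((Real.log ((q + 1) / (q - 1)) : ℂ)) / 2 + (n : ℂ) * (Real.pi : ℂ) * Complex.I) * (t:ℂ)
        = ((f*t : ℝ) : ℂ) + (n:ℂ) * (Real.pi:ℂ) * Complex.I * (t:ℂ) by
      rw [hfdef]; push_cast; ring]
    rw [Complex.exp_add, Complex.ofReal_exp]
    ring
  set u : ℝ → ℝ := fun t : ℝ => Real.exp (f*t) * ‖g t‖ with hudef
  have hueq : ∀ t, u t = Real.exp (f*t) * ‖g t‖ := fun t => rfl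
  have hu0 : ∀ t, 0 ≤ u t := fun t => mul_nonneg (Real.exp_pos _).le (norm_nonneg _)
  have hucont : Continuous u := by
    rw [hudef]
    exact (Real.continuous_exp.comp (continuous_const.mul continuous_id)).mul hgcont.norm
  have hunorm : ∀ t : ℝ, ‖(∑' n : ℤ, a n * Complex.exp (lam n * (t:ℂ)))‖ = u t := by
    intro t
    rw [hye t, norm_mul, Complex.norm_real, Real.norm_eq_abs, abs_of_pos (Real.exp_pos _), hueq]
  have hubdd : ∀ t : ℝ, u t ≤ S * Real.exp (f*t) := by
    intro t
    rw [hueq, mul_comm]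
    exact mul_le_mul_of_nonneg_right (hgbdd t) (Real.exp_pos _).le
  have hy_ub : ∀ t, ‖y t‖ ≤ u t + M := by
    intro t
    rw [hy t]
    exact (norm_add_le _ _).trans (by rw [hunorm]; exact add_le_add_right (hdM t) _)
  have hy_lb : ∀ t, u t - M ≤ ‖y t‖ := by
    intro t
    have h1 : u t = ‖y t - d t‖ := by
      rw [hy t]; rw [add_sub_cancel_right, hunorm]
    have := norm_sub_le (y t) (d t)
    rw [← h1] at this
    linarith [hdM t]
  have hsq_ub : ∀ t, ‖y t‖^2 ≤ u t^2 + 2*M*u t + 3*M^2 := by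
    intro t
    nlinarith [hy_ub t, norm_nonneg (y t), hu0 t, hM]
  have hsq_lb : ∀ t, u t^2 - 2*M*u t - 3*M^2 ≤ ‖y t‖^2 := by
    intro t
    rcases le_or_gt (u t) (3*M) with h | h
    · nlinarith [norm_nonneg (y t), hu0 t, hM, sq_nonneg (‖y t‖)]
    · have h1 : u t - M ≤ ‖y t‖ := hy_lb t
      have h2 : 0 ≤ ‖y t‖ - (u t - M) := sub_nonneg.mpr h1
      have h3 : 0 ≤ ‖y t‖ + (u t - M) := by nlinarith [norm_nonneg (y t)]
      nlinarith [mul_nonneg h2 h3, sq_nonneg M]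
  -- measurability / integrability
  have hymeas : Measurable y := by
    have hyfun : y = fun t => ((Real.exp (f*t) : ℝ) : ℂ) * g t + d t :=
      funext fun t => by rw [hy t, hye t]
    rw [hyfun]
    exact (((Complex.continuous_ofReal.comp
      (Real.continuous_exp.comp (continuous_const.mul continuous_id))).mul hgcont).measurable).add
      hdmeas
  have hcle : (0:ℝ) < c := by linarith
  have hint_y2 : ∀ T : ℝ, IntervalIntegrable (fun t => ‖y t‖^2) volume T (T+c) := by
    intro T
    apply intInt_of_bounded (hymeas.norm.pow measurable_const) (by linarith)
      (C := (S * Real.exp (f*(T+c)) + M)^2)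
    intro t ht
    rw [abs_of_nonneg (sq_nonneg _)]
    apply pow_le_pow_left₀ (norm_nonneg _)
    refine (hy_ub t).trans (add_le_add_left ?_ M)
    refine (hubdd t).trans ?_
    exact mul_le_mul_of_nonneg_left
      (Real.exp_le_exp.mpr (mul_le_mul_of_nonneg_left ht.2 hfpos.le)) hS0
  have hint_u2 : ∀ A B : ℝ, IntervalIntegrable (fun t => (u t)^2) volume A B :=
    fun A B => ((hucont.pow 2).intervalIntegrable A B)
  have hint_u : ∀ A B : ℝ, IntervalIntegrable u volume A B :=
    fun A B => (hucont.intervalIntegrable A B)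
  have hint_g2 : ∀ A B : ℝ, IntervalIntegrable (fun t => ‖g t‖^2) volume A B :=
    fun A B => ((hgcont.norm.pow 2).intervalIntegrable A B)
  have hint_g : ∀ A B : ℝ, IntervalIntegrable (fun t => ‖g t‖) volume A B :=
    fun A B => (hgcont.norm.intervalIntegrable A B)
  -- main quantities
  set N : ℝ → ℝ := fun T : ℝ => ∫ t in T..(T+c), ‖y t‖^2 with hNdef
  set E : ℝ → ℝ := fun T : ℝ => ∫ t in T..(T+c), (u t)^2 with hEdef
  set P : ℝ := ∫ t in (0:ℝ)..2, ‖g t‖^2 with hPdef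
  have hNnonneg : ∀ T, 0 ≤ N T := fun T =>
    intervalIntegral.integral_nonneg (by linarith) (fun t _ => sq_nonneg _)
  -- positivity of P via the Fourier coefficient
  obtain ⟨m, hm⟩ : ∃ m, a m ≠ 0 := by
    by_contra h; push_neg at h; exact ha0 (funext h)
  have hexp_im : ∀ t : ℝ, ‖Complex.exp (-((m:ℂ) * (Real.pi:ℂ) * Complex.I * t))‖ = 1 := by
    intro t
    rw [Complex.norm_exp]
    have : (-((m:ℂ) * (Real.pi:ℂ) * Complex.I * t)).re = 0 := by
      simp [Complex.mul_re, Complex.mul_im]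
    rw [this, Real.exp_zero]
  have hcoeff := fourier_coeff a ha m
  have h2am : 2*‖a m‖ ≤ ∫ t in (0:ℝ)..2, ‖g t‖ := by
    calc 2*‖a m‖ = ‖(2 : ℂ) * a m‖ := by rw [norm_mul]; norm_num
      _ = ‖∫ t in (0:ℝ)..2, g t * Complex.exp (-((m:ℂ) * (Real.pi:ℂ) * Complex.I * t))‖ := by
          rw [hgdef]; simp only; rw [hcoeff]
      _ ≤ ∫ t in (0:ℝ)..2, ‖g t * Complex.exp (-((m:ℂ) * (Real.pi:ℂ) * Complex.I * t))‖ :=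
          intervalIntegral.norm_integral_le_integral_norm (by norm_num)
      _ = ∫ t in (0:ℝ)..2, ‖g t‖ := by
          apply intervalIntegral.integral_congr
          intro t _
          simp only [norm_mul, hexp_im t, mul_one]
  have hP_lb : 2*‖a m‖^2 ≤ P := by
    have hpt : ∀ t : ℝ, 2*‖a m‖*‖g t‖ - ‖a m‖^2 ≤ ‖g t‖^2 := fun t => by
      nlinarith [sq_nonneg (‖g t‖ - ‖a m‖)]
    have hmono : ∫ t in (0:ℝ)..2, (2*‖a m‖*‖g t‖ - ‖a m‖^2) ≤ P := by
      rw [hPdef]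
      apply intervalIntegral.integral_mono_on (by norm_num)
        (((continuous_const.mul hgcont.norm).sub continuous_const).intervalIntegrable 0 2)
        (hint_g2 0 2)
      exact fun t _ => hpt t
    have hcomp : ∫ t in (0:ℝ)..2, (2*‖a m‖*‖g t‖ - ‖a m‖^2)
        = 2*‖a m‖*(∫ t in (0:ℝ)..2, ‖g t‖) - 2*‖a m‖^2 := by
      rw [intervalIntegral.integral_sub (f := fun t => 2*‖a m‖*‖g t‖) (g := fun _ => ‖a m‖^2) ((continuous_const.mul hgcont.norm).intervalIntegrable 0 2)
        (intervalIntegrable_const), intervalIntegral.integral_const_mul,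
        intervalIntegral.integral_const]
      norm_num
    have := mul_le_mul_of_nonneg_left h2am (by positivity : (0:ℝ) ≤ 2*‖a m‖)
    nlinarith [hmono, hcomp]
  have hPpos : 0 < P :=
    lt_of_lt_of_le (by have := norm_pos_iff.mpr hm; positivity) hP_lb
  -- shift property of E
  have hushift : ∀ x : ℝ, (u (x-2))^2 = Real.exp (-(4*f)) * (u x)^2 := by
    intro x
    have hg2 : g (x-2) = g x := by
      conv_rhs => rw [show x = (x-2)+2 by ring, hgper]
    have h : Real.exp (f*(x-2)) ^ 2 = Real.exp (-(4*f)) * Real.exp (f*x)^2 := by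
      rw [sq, sq, ← Real.exp_add, ← Real.exp_add, ← Real.exp_add]
      exact congrArg Real.exp (by ring)
    rw [hueq, hueq, hg2, mul_pow, mul_pow, h]
    ring
  have hEshift : ∀ T : ℝ, E (T-2) = Real.exp (-(4*f)) * E T := by
    intro T
    have h1 : E (T-2) = ∫ x in T..(T+c), (u (x-2))^2 := by
      rw [intervalIntegral.integral_comp_sub_right (fun x => (u x)^2) 2]
      rw [hEdef]
      simp only
      congr 1
      ring
    rw [h1]
    simp only [hushift]
    rw [intervalIntegral.integral_const_mul]
  -- lower and upper bounds for E
  have hgper2 : Function.Periodic (fun t => ‖g t‖^2) 2 := fun t => by simp only [hgper t]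
  have hElb : ∀ T : ℝ, Real.exp (2*f*T) * P ≤ E T := by
    intro T
    have step3 : ∫ t in T..(T+2), Real.exp (2*f*T)*‖g t‖^2 = Real.exp (2*f*T) * P := by
      rw [intervalIntegral.integral_const_mul, hPdef]
      congr 1
      simpa using hgper2.intervalIntegral_add_eq T 0
    have step2 : ∫ t in T..(T+2), Real.exp (2*f*T)*‖g t‖^2 ≤ ∫ t in T..(T+2), (u t)^2 := by
      apply intervalIntegral.integral_mono_on (by linarith)
        ((continuous_const.mul (hgcont.norm.pow 2)).intervalIntegrable _ _) (hint_u2 _ _)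
      intro t ht
      rw [hueq, mul_pow, hexpsq]
      exact mul_le_mul_of_nonneg_right
        (Real.exp_le_exp.mpr (by nlinarith [ht.1])) (sq_nonneg _)
    have step1 : ∫ t in T..(T+2), (u t)^2 ≤ E T := by
      apply intervalIntegral.integral_mono_interval le_rfl (by linarith) (by linarith)
        (ae_of_all _ fun t => sq_nonneg _) (hint_u2 _ _)
    linarith [step3 ▸ step2, step1]
  have hEub : ∀ T : ℝ, E T ≤ Real.exp (2*f*T) * (S^2*c*Real.exp (2*f*c)) := by
    intro T
    have hptb : ∀ t ∈ Set.Icc T (T+c), (u t)^2 ≤ S^2 * Real.exp (2*f*(T+c)) := by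
      intro t ht
      have h1 : u t ≤ S * Real.exp (f*(T+c)) :=
        (hubdd t).trans (mul_le_mul_of_nonneg_left
          (Real.exp_le_exp.mpr (mul_le_mul_of_nonneg_left ht.2 hfpos.le)) hS0)
      calc (u t)^2 ≤ (S * Real.exp (f*(T+c)))^2 := pow_le_pow_left₀ (hu0 t) h1 2
        _ = S^2 * Real.exp (2*f*(T+c)) := by
            rw [mul_pow, hexpsq]; ring_nf
    calc E T ≤ ∫ _t in T..(T+c), S^2 * Real.exp (2*f*(T+c)) := by
          rw [hEdef]
          exact intervalIntegral.integral_mono_on (by linarith) (hint_u2 _ _)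
            intervalIntegrable_const hptb
      _ = c * (S^2 * Real.exp (2*f*(T+c))) := by
          rw [intervalIntegral.integral_const, add_sub_cancel_left, smul_eq_mul]
      _ = Real.exp (2*f*T) * (S^2*c*Real.exp (2*f*c)) := by
          rw [show 2*f*(T+c) = 2*f*T + 2*f*c by ring, Real.exp_add]; ring
  have hIu : ∀ T : ℝ, ∫ t in T..(T+c), u t ≤ Real.exp (f*T) * (S*c*Real.exp (f*c)) := by
    intro T
    calc (∫ t in T..(T+c), u t) ≤ ∫ _t in T..(T+c), S * Real.exp (f*(T+c)) := by
          apply intervalIntegral.integral_mono_on (by linarith) (hint_u _ _)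
            intervalIntegrable_const
          intro t ht
          exact (hubdd t).trans (mul_le_mul_of_nonneg_left
            (Real.exp_le_exp.mpr (mul_le_mul_of_nonneg_left ht.2 hfpos.le)) hS0)
      _ = c * (S * Real.exp (f*(T+c))) := by
          rw [intervalIntegral.integral_const, add_sub_cancel_left, smul_eq_mul]
      _ = Real.exp (f*T) * (S*c*Real.exp (f*c)) := by
          rw [show f*(T+c) = f*T + f*c by ring, Real.exp_add]; ring
  -- N vs E bounds
  set CI : ℝ := S*c*Real.exp (f*c) with hCIdef
  have hCI0 : 0 ≤ CI := by positivity
  have hIntu2 : ∀ T : ℝ, IntervalIntegrable (fun t => u t^2 + (2*M*u t + 3*M^2)) volume T (T+c) :=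
    fun T => ((hucont.pow 2).add ((continuous_const.mul hucont).add continuous_const)).intervalIntegrable _ _
  have hIntu2' : ∀ T : ℝ, IntervalIntegrable (fun t => u t^2 - 2*M*u t - 3*M^2) volume T (T+c) :=
    fun T => (((hucont.pow 2).sub (continuous_const.mul hucont)).sub continuous_const).intervalIntegrable _ _
  have hsplit : ∀ T : ℝ, (∫ t in T..(T+c), (2*M*u t + 3*M^2))
      = 2*M*(∫ t in T..(T+c), u t) + 3*M^2*c := by
    intro T
    rw [intervalIntegral.integral_add (f := fun t => 2*M*u t) (g := fun _ => 3*M^2) ((continuous_const.mul hucont).intervalIntegrable _ _)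
      intervalIntegrable_const, intervalIntegral.integral_const_mul,
      intervalIntegral.integral_const, add_sub_cancel_left, smul_eq_mul]
    ring
  have hN_ub : ∀ T : ℝ, N T ≤ E T + (2*M*CI*Real.exp (f*T) + 3*M^2*c) := by
    intro T
    have h1 : N T ≤ ∫ t in T..(T+c), (u t^2 + (2*M*u t + 3*M^2)) := by
      rw [hNdef]
      exact intervalIntegral.integral_mono_on (by linarith) (hint_y2 T) (hIntu2 T)
        (fun t _ => le_of_le_of_eq (hsq_ub t) (by ring))
    have h2 : (∫ t in T..(T+c), (u t^2 + (2*M*u t + 3*M^2)))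
        = E T + (2*M*(∫ t in T..(T+c), u t) + 3*M^2*c) := by
      rw [intervalIntegral.integral_add (f := fun t => u t^2) (g := fun t => 2*M*u t + 3*M^2) (hint_u2 _ _)
        (((continuous_const.mul hucont).add continuous_const).intervalIntegrable _ _), hsplit]
    have h3 : 2*M*(∫ t in T..(T+c), u t) ≤ 2*M*(Real.exp (f*T) * CI) :=
      mul_le_mul_of_nonneg_left (hIu T) (by linarith)
    have h4 : 2*M*(Real.exp (f*T) * CI) = 2*M*CI*Real.exp (f*T) := by ring
    calc N T ≤ E T + (2*M*(∫ t in T..(T+c), u t) + 3*M^2*c) := by rw [← h2]; exact h1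
      _ ≤ E T + (2*M*CI*Real.exp (f*T) + 3*M^2*c) := by linarith [h3, h4]
  have hN_lb : ∀ T : ℝ, E T - (2*M*CI*Real.exp (f*T) + 3*M^2*c) ≤ N T := by
    intro T
    have h1 : (∫ t in T..(T+c), (u t^2 - 2*M*u t - 3*M^2)) ≤ N T := by
      rw [hNdef]
      exact intervalIntegral.integral_mono_on (by linarith) (hIntu2' T) (hint_y2 T)
        (fun t _ => hsq_lb t)
    have h2 : (∫ t in T..(T+c), (u t^2 - 2*M*u t - 3*M^2))
        = E T - 2*M*(∫ t in T..(T+c), u t) - 3*M^2*c := by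
      rw [intervalIntegral.integral_sub (f := fun t => u t^2 - 2*M*u t) (g := fun _ => 3*M^2) (((hucont.pow 2).sub
        (continuous_const.mul hucont)).intervalIntegrable _ _) intervalIntegrable_const,
        intervalIntegral.integral_sub (f := fun t => u t^2) (g := fun t => 2*M*u t) (hint_u2 _ _)
        ((continuous_const.mul hucont).intervalIntegrable _ _),
        intervalIntegral.integral_const_mul, intervalIntegral.integral_const,
        add_sub_cancel_left, smul_eq_mul]
      simp only [hEdef]
      ring
    have h3 : 2*M*(∫ t in T..(T+c), u t) ≤ 2*M*(Real.exp (f*T) * CI) :=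
      mul_le_mul_of_nonneg_left (hIu T) (by linarith)
    have h4 : 2*M*(Real.exp (f*T) * CI) = 2*M*CI*Real.exp (f*T) := by ring
    linarith [h1, h2, h3, h4]
  have habs : ∀ T : ℝ, |N T - E T| ≤ 2*M*CI*Real.exp (f*T) + 3*M^2*c := by
    intro T
    rw [abs_le]
    constructor <;> [linarith [hN_lb T]; linarith [hN_ub T]]
  -- normalized quantities
  set nn : ℝ → ℝ := fun T : ℝ => N T * Real.exp (-(2*f*T)) with hnndef
  set ee : ℝ → ℝ := fun T : ℝ => E T * Real.exp (-(2*f*T)) with heedef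
  have hnn : ∀ T, nn T = N T * Real.exp (-(2*f*T)) := fun T => rfl
  have hee : ∀ T, ee T = E T * Real.exp (-(2*f*T)) := fun T => rfl
  have hcancel : ∀ A : ℝ, Real.exp A * Real.exp (-A) = 1 := fun A => by
    rw [← Real.exp_add]; simp
  have hee_lb : ∀ T, P ≤ ee T := by
    intro T
    have := mul_le_mul_of_nonneg_right (hElb T) (Real.exp_pos (-(2*f*T))).le
    calc P = Real.exp (2*f*T) * P * Real.exp (-(2*f*T)) := by
          rw [show Real.exp (2*f*T) * P * Real.exp (-(2*f*T))
            = P * (Real.exp (2*f*T) * Real.exp (-(2*f*T))) by ring, hcancel, mul_one]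
      _ ≤ ee T := this
  have heeshift : ∀ T : ℝ, ee (T-2) = ee T := by
    intro T
    rw [hee, hee, hEshift]
    rw [show Real.exp (-(4*f)) * E T * Real.exp (-(2*f*(T-2)))
      = E T * (Real.exp (-(4*f)) * Real.exp (-(2*f*(T-2)))) by ring, ← Real.exp_add]
    congr 2
    ring
  set dd : ℝ → ℝ := fun T : ℝ => (2*M*CI) * Real.exp (-(f*T)) + (3*M^2*c) * Real.exp (-(2*f*T))
    with hdddef
  have hdd : ∀ T, dd T = (2*M*CI) * Real.exp (-(f*T)) + (3*M^2*c) * Real.exp (-(2*f*T)) :=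
    fun T => rfl
  have hdd0 : ∀ T, 0 ≤ dd T := fun T => by rw [hdd]; positivity
  have hdiff : ∀ T : ℝ, |nn T - ee T| ≤ dd T := by
    intro T
    have hE1 : Real.exp (f*T) * Real.exp (-(2*f*T)) = Real.exp (-(f*T)) := by
      rw [← Real.exp_add]; congr 1; ring
    calc |nn T - ee T| = |N T - E T| * Real.exp (-(2*f*T)) := by
          rw [hnn, hee, ← sub_mul, abs_mul, abs_of_pos (Real.exp_pos _)]
      _ ≤ (2*M*CI*Real.exp (f*T) + 3*M^2*c) * Real.exp (-(2*f*T)) :=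
          mul_le_mul_of_nonneg_right (habs T) (Real.exp_pos _).le
      _ = dd T := by
          rw [hdd, add_mul, mul_assoc (2*M*CI), hE1]
  -- limits
  have hshift_tendsto : Tendsto (fun T : ℝ => T - 2) atTop atTop :=
    tendsto_atTop_add_const_right atTop (-2) tendsto_id
  have hexp_tendsto : ∀ b : ℝ, 0 < b → Tendsto (fun T : ℝ => Real.exp (-(b*T))) atTop (𝓝 0) := by
    intro b hb
    apply Real.tendsto_exp_atBot.comp
    exact tendsto_neg_atTop_atBot.comp (tendsto_id.const_mul_atTop hb)
  have hdd_tendsto : Tendsto dd atTop (𝓝 0) := by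
    have := ((hexp_tendsto f hfpos).const_mul (2*M*CI)).add
      ((hexp_tendsto (2*f) (by positivity)).const_mul (3*M^2*c))
    simpa using this
  have hdd_tendsto' : Tendsto (fun T => dd (T-2)) atTop (𝓝 0) := hdd_tendsto.comp hshift_tendsto
  -- eventual lower bound on nn (T-2)
  have hev1 : ∀ᶠ T in atTop, dd (T-2) < P/4 :=
    hdd_tendsto'.eventually_lt_const (by linarith)
  have hev2 : ∀ᶠ T in atTop, dd T < P/4 :=
    hdd_tendsto.eventually_lt_const (by linarith)
  have hnn2_lb : ∀ᶠ T in atTop, P/2 ≤ nn (T-2) := by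
    filter_upwards [hev1] with T h1
    have h2 := hdiff (T-2)
    have h3 := hee_lb (T-2)
    have : |nn (T-2) - ee (T-2)| < P/4 := lt_of_le_of_lt h2 h1
    rw [abs_lt] at this
    linarith [this.1]
  -- ratio limit
  have hC : Tendsto (fun T => nn T / nn (T-2)) atTop (𝓝 1) := by
    rw [← tendsto_sub_nhds_zero_iff]
    rw [tendsto_zero_iff_abs_tendsto_zero]
    apply squeeze_zero' (Eventually.of_forall fun T => abs_nonneg _)
      (g := fun T => (dd T + dd (T-2)) / (P/2))
    · filter_upwards [hnn2_lb, hev1, hev2] with T hlb h1 h2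
      have hpos : 0 < nn (T-2) := lt_of_lt_of_le (by linarith) hlb
      have hnum : |nn T - nn (T-2)| ≤ dd T + dd (T-2) := by
        have := heeshift T
        calc |nn T - nn (T-2)| = |(nn T - ee T) - (nn (T-2) - ee (T-2))| := by
              rw [heeshift T]  -- ee (T-2) = ee T
              ring_nf
            _ ≤ |nn T - ee T| + |nn (T-2) - ee (T-2)| := abs_sub _ _
            _ ≤ dd T + dd (T-2) := add_le_add (hdiff T) (hdiff (T-2))
      have : nn T / nn (T-2) - 1 = (nn T - nn (T-2)) / nn (T-2) := by
        field_simp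
      rw [this, abs_div, abs_of_pos hpos]
      exact div_le_div₀ (by positivity) hnum (by linarith) hlb
    · have := (hdd_tendsto.add hdd_tendsto').div_const (P/2)
      simpa using this
  -- ratio of N's
  have hNdivEq : ∀ T : ℝ, N T / N (T-2) = (nn T / nn (T-2)) * Real.exp (4*f) := by
    intro T
    rw [hnn, hnn, mul_div_mul_comm]
    have hone : Real.exp (-(2*f*T)) / Real.exp (-(2*f*(T-2))) * Real.exp (4*f) = 1 := by
      rw [← Real.exp_sub, ← Real.exp_add,
        show (-(2*f*T) - -(2*f*(T-2)) + 4*f) = (0:ℝ) by ring]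
      exact Real.exp_zero
    rw [mul_assoc, hone, mul_one]
  have hD : Tendsto (fun T => N T / N (T-2)) atTop (𝓝 (Real.exp (4*f))) := by
    have h1 := hC.mul_const (Real.exp (4*f))
    rw [one_mul] at h1
    exact Tendsto.congr (fun T => (hNdivEq T).symm) h1
  -- sqrt ratio
  have hsqrt4f : Real.sqrt (Real.exp (4*f)) = Real.exp (2*f) := by
    rw [show (4:ℝ)*f = 2*f + 2*f by ring, Real.exp_add, Real.sqrt_mul_self (Real.exp_pos _).le]
  have hrho : Tendsto (fun T => Real.sqrt (N T) / Real.sqrt (N (T-2))) atTop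
      (𝓝 (Real.exp (2*f))) := by
    have h1 : Tendsto (fun T => Real.sqrt (N T / N (T-2))) atTop (𝓝 (Real.exp (2*f))) := by
      rw [← hsqrt4f]
      exact (Real.continuous_sqrt.tendsto _).comp hD
    exact h1.congr fun T => Real.sqrt_div (hNnonneg T) _
  -- eventual positivity of sqrt (N (T-2))
  have hBpos : ∀ᶠ T in atTop, 0 < Real.sqrt (N (T-2)) := by
    filter_upwards [hnn2_lb] with T hlb
    have hNpos : 0 < N (T-2) := by
      by_contra h'
      push_neg at h'
      have : nn (T-2) ≤ 0 := mul_nonpos_of_nonpos_of_nonneg h' (Real.exp_pos _).le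
      nlinarith [hPpos]
    exact Real.sqrt_pos.mpr hNpos
  -- final assembly
  have hRgt1 : 1 < Real.exp (2*f) := by rw [hexp2f]; exact hr1
  have hfinal_val : (Real.exp (2*f) + 1) / (Real.exp (2*f) - 1) = q := by
    rw [hexp2f]
    rw [div_eq_iff (by rw [div_sub_one hq1.ne', show q+1-(q-1) = (2:ℝ) by ring]; positivity)]
    field_simp
    ring
  have h1 : Tendsto (fun T => (Real.sqrt (N T) / Real.sqrt (N (T-2)) + 1)
      / (Real.sqrt (N T) / Real.sqrt (N (T-2)) - 1)) atTop (𝓝 q) := by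
    rw [← hfinal_val]
    exact Tendsto.div (hrho.add tendsto_const_nhds) (hrho.sub tendsto_const_nhds)
      (by intro h; nlinarith [hRgt1, sub_eq_zero.mp h])
  have heqv : ∀ᶠ T in atTop,
      (Real.sqrt (N T) / Real.sqrt (N (T-2)) + 1) / (Real.sqrt (N T) / Real.sqrt (N (T-2)) - 1)
      = (Real.sqrt (N T) + Real.sqrt (N (T-2))) / (Real.sqrt (N T) - Real.sqrt (N (T-2))) := by
    filter_upwards [hBpos] with T hB
    have hA := Real.sqrt_nonneg (N T)
    have e1 : Real.sqrt (N T) / Real.sqrt (N (T-2)) + 1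
        = (Real.sqrt (N T) + Real.sqrt (N (T-2))) / Real.sqrt (N (T-2)) := by
      field_simp
    have e2 : Real.sqrt (N T) / Real.sqrt (N (T-2)) - 1
        = (Real.sqrt (N T) - Real.sqrt (N (T-2))) / Real.sqrt (N (T-2)) := by
      field_simp
    rw [e1, e2, div_div_div_cancel_right₀ hB.ne']
  have hmain : Tendsto (fun T =>
      (Real.sqrt (N T) + Real.sqrt (N (T-2))) / (Real.sqrt (N T) - Real.sqrt (N (T-2))))
      atTop (𝓝 q) := h1.congr' heqv
  -- translate to the stated goal
  refine hmain.congr fun T => ?_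
  have hNT2 : N (T-2) = ∫ t in (T-2)..(T+c-2), ‖y t‖^2 := by
    rw [hNdef]
    simp only
    congr 1
    ring
  rw [hNT2, hNdef]
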